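/- Let Ω be a nonempty finite type with probability weights p : Ω → ℝ (p ω > 0 for all ω, ∑_ω p ω = 1), ξ : Ω → (ι → ℝ), and Θ convex on a convex set S ⊆ (ι → ℝ) containing the range of ξ. If a partition 𝒫' of Ω refines a partition 𝒫 (every part of 𝒫' is contained in some part of 𝒫), then the partition lower bounds satisfy ∑_{C ∈ 𝒫.parts} P(C) · Θ(μ_C) ≤ ∑_{C ∈ 𝒫'.parts} P(C) · Θ(μ_C). -/
import Mathlib


/-- Theorem 2 of the paper: refining a partition yields a mean-value lower bound
that is at least as tight. `Pt' ≤ Pt` is the refinement order on `Finpartition`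
(every part of `Pt'` is contained in some part of `Pt`). -/
theorem refinement_tightens_lower_bound
    {Ω ι : Type*} [Fintype Ω] [DecidableEq Ω] [Nonempty Ω] [Fintype ι]
    (p : Ω → ℝ) (hp : ∀ ω, 0 < p ω) (hsum : ∑ ω, p ω = 1)
    (ξ : Ω → ι → ℝ) (S : Set (ι → ℝ)) (hS : Convex ℝ S)
    (hξS : ∀ ω, ξ ω ∈ S)
    (Θ : (ι → ℝ) → ℝ) (hΘ : ConvexOn ℝ S Θ)
    (Pt Pt' : Finpartition (Finset.univ : Finset Ω)) (href : Pt' ≤ Pt) :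
    ∑ C ∈ Pt.parts,
        (∑ ω ∈ C, p ω) * Θ ((∑ ω ∈ C, p ω)⁻¹ • ∑ ω ∈ C, p ω • ξ ω) ≤
      ∑ C ∈ Pt'.parts,
        (∑ ω ∈ C, p ω) * Θ ((∑ ω ∈ C, p ω)⁻¹ • ∑ ω ∈ C, p ω • ξ ω) := by
  classical
  set F : Finset Ω → Finset (Finset Ω) := fun C => Pt'.parts.filter (· ⊆ C) with hF
  -- each part D of Pt' lying inside C; these cover C
  have hcover : ∀ C ∈ Pt.parts, (F C).biUnion id = C := by
    intro C hC
    ext ω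
    simp only [Finset.mem_biUnion, Finset.mem_filter, id, hF]
    constructor
    · rintro ⟨D, ⟨hD, hDC⟩, hωD⟩; exact hDC hωD
    · intro hω
      obtain ⟨D, hD, hωD⟩ := Pt'.exists_mem (Finset.mem_univ ω)
      obtain ⟨C', hC', hDC'⟩ := href hD
      have : C' = C := Pt.eq_of_mem_parts hC' hC (hDC' hωD) hω
      exact ⟨D, ⟨hD, this ▸ hDC'⟩, hωD⟩
  have hdisjF : ∀ C, Set.PairwiseDisjoint ↑(F C) (id : Finset Ω → Finset Ω) := by
    intro C
    exact Pt'.disjoint.subset (Finset.coe_subset.mpr (Finset.filter_subset _ _))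
  -- sums over C split into sums over subparts
  have hsplitR : ∀ (f : Ω → ℝ), ∀ C ∈ Pt.parts,
      ∑ D ∈ F C, ∑ ω ∈ D, f ω = ∑ ω ∈ C, f ω := by
    intro f C hC
    conv_rhs => rw [← hcover C hC]
    exact (Finset.sum_biUnion (hdisjF C)).symm
  have hsplitV : ∀ (f : Ω → ι → ℝ), ∀ C ∈ Pt.parts,
      ∑ D ∈ F C, ∑ ω ∈ D, f ω = ∑ ω ∈ C, f ω := by
    intro f C hC
    conv_rhs => rw [← hcover C hC]
    exact (Finset.sum_biUnion (hdisjF C)).symm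
  -- Pt'.parts is the disjoint union of the F C
  have hparts : Pt'.parts = Pt.parts.biUnion F := by
    ext D
    simp only [Finset.mem_biUnion, Finset.mem_filter, hF]
    constructor
    · intro hD
      obtain ⟨C, hC, hDC⟩ := href hD
      exact ⟨C, hC, hD, hDC⟩
    · rintro ⟨C, hC, hD, hDC⟩; exact hD
  have hdisj2 : Set.PairwiseDisjoint ↑Pt.parts F := by
    intro C1 h1 C2 h2 hne
    simp only [Finset.disjoint_left, hF]
    intro D hD1 hD2
    simp only [Finset.mem_filter, hF] at hD1 hD2
    obtain ⟨ω, hω⟩ := Pt'.nonempty_of_mem_parts hD1.1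
    exact hne (Pt.eq_of_mem_parts h1 h2 (hD1.2 hω) (hD2.2 hω))
  rw [hparts, Finset.sum_biUnion hdisj2]
  apply Finset.sum_le_sum
  intro C hC
  set PD : Finset Ω → ℝ := fun D => ∑ ω ∈ D, p ω with hPD
  set μ : Finset Ω → ι → ℝ := fun D => (PD D)⁻¹ • ∑ ω ∈ D, p ω • ξ ω with hμ
  have hPDpos : ∀ D : Finset Ω, D.Nonempty → 0 < PD D := by
    intro D ⟨ω, hω⟩
    exact Finset.sum_pos' (fun i _ => (hp i).le) ⟨ω, hω, hp ω⟩
  have hCpos : 0 < PD C := hPDpos C (Pt.nonempty_of_mem_parts hC)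
  have hμS : ∀ D : Finset Ω, D.Nonempty → μ D ∈ S := by
    intro D hDne
    have := hS.centerMass_mem (t := D) (w := p) (z := ξ)
      (fun i _ => (hp i).le) (hPDpos D hDne) (fun i _ => hξS i)
    simpa [Finset.centerMass, hμ, hPD] using this
  -- rewrite totals over C in terms of subparts
  have hsum1 : PD C = ∑ D ∈ F C, PD D := by
    simp only [hPD]; exact (hsplitR p C hC).symm
  have hsum2 : ∑ ω ∈ C, p ω • ξ ω = ∑ D ∈ F C, PD D • μ D := by
    rw [← hsplitV (fun ω => p ω • ξ ω) C hC]
    refine Finset.sum_congr rfl fun D hD => ?_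
    have hDne : D.Nonempty := Pt'.nonempty_of_mem_parts (Finset.mem_filter.mp hD).1
    rw [hμ]
    rw [smul_inv_smul₀ (hPDpos D hDne).ne']
  have hJ : Θ ((F C).centerMass PD μ) ≤ (F C).centerMass PD (Θ ∘ μ) := by
    refine hΘ.map_centerMass_le (fun D hD => ?_) ?_ (fun D hD => ?_)
    · exact Finset.sum_nonneg fun i _ => (hp i).le
    · rw [← hsum1]; exact hCpos
    · exact hμS D (Pt'.nonempty_of_mem_parts (Finset.mem_filter.mp hD).1)
  have hcm : (F C).centerMass PD μ = (PD C)⁻¹ • ∑ ω ∈ C, p ω • ξ ω := by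
    rw [Finset.centerMass, ← hsum1, hsum2]
  rw [hcm] at hJ
  calc PD C * Θ ((PD C)⁻¹ • ∑ ω ∈ C, p ω • ξ ω)
      ≤ PD C * (F C).centerMass PD (Θ ∘ μ) := by
        exact mul_le_mul_of_nonneg_left hJ hCpos.le
    _ = ∑ D ∈ F C, PD D * Θ (μ D) := by
        rw [Finset.centerMass, ← hsum1, smul_eq_mul, ← mul_assoc,
          mul_inv_cancel₀ hCpos.ne', one_mul]
        simp [smul_eq_mul]
    _ = ∑ D ∈ F C, PD D * Θ ((PD D)⁻¹ • ∑ ω ∈ D, p ω • ξ ω) := rfl
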